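/- Let (w_k)_{k≥0} be a weight sequence with w_0 > 0 and ω := sup{k : w_k > 0} satisfying 1 ≤ ω < ∞. Suppose n → ∞ and m = m(n) with m/n → λ > 0. Then for every fixed j ≥ 1, with probability tending to 1 at least j of the coordinates of B_{m(n),n} equal ω; that is, P(#{1 ≤ i ≤ n : Y_i = ω} ≥ j) → 1 as n → ∞. In particular the j-th largest value among Y_1,…,Y_n equals ω with probability tending to 1. -/

import Mathlib

open Filter Topology
open scoped ENNReal Classical

/-- Generating function `Φ(t) = ∑ w_k t^k` of a weight sequence, with values in `[0,∞]`. -/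
noncomputable def PhiE (w : ℕ → ℝ) (t : ℝ) : ℝ≥0∞ :=
  ∑' k : ℕ, ENNReal.ofReal (w k * t ^ k)

/-- Radius of convergence `ρ ∈ [0,∞]` of the generating function of a weight sequence. -/
noncomputable def rhoW (w : ℕ → ℝ) : ℝ≥0∞ :=
  sSup {r : ℝ≥0∞ | ∃ t : ℝ, 0 ≤ t ∧ r = ENNReal.ofReal t ∧
    Summable (fun k : ℕ => w k * t ^ k)}

/-- `Ψ(t) = t Φ'(t)/Φ(t) = (∑ k w_k t^k)/(∑ w_k t^k)`, with values in `[0,∞]`. -/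
noncomputable def PsiE (w : ℕ → ℝ) (t : ℝ) : ℝ≥0∞ :=
  (∑' k : ℕ, ENNReal.ofReal ((k : ℝ) * w k * t ^ k)) / PhiE w t

/-- `ν := lim_{t↑ρ} Ψ(t) ∈ [0,∞]` (`= 0` if `ρ = 0`); since `Ψ` is increasing on `[0,ρ)`
this limit equals the supremum of `Ψ` over `[0,ρ)`. -/
noncomputable def nuW (w : ℕ → ℝ) : ℝ≥0∞ :=
  sSup {x : ℝ≥0∞ | ∃ t : ℝ, 0 ≤ t ∧ ENNReal.ofReal t < rhoW w ∧ x = PsiE w t}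

/-- `τ(λ) ∈ [0,ρ]`: the unique `t ∈ [0,ρ]` with `Ψ(t) = λ` when `λ ≤ ν`, and `τ := ρ`
when `λ > ν`.  Since `Ψ` is continuous and strictly increasing on `[0,ρ)`, this equals
`sup {t < ρ : Ψ(t) ≤ λ}`. -/
noncomputable def tauW (w : ℕ → ℝ) (lam : ℝ≥0∞) : ℝ≥0∞ :=
  sSup {r : ℝ≥0∞ | ∃ t : ℝ, 0 ≤ t ∧ r = ENNReal.ofReal t ∧
    ENNReal.ofReal t < rhoW w ∧ PsiE w t ≤ lam}

/-- `ω := sup {k : w_k > 0} ∈ [0,∞]`. -/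
noncomputable def omegaW (w : ℕ → ℝ) : ℝ≥0∞ :=
  sSup ((fun k : ℕ => (k : ℝ≥0∞)) '' {k : ℕ | 0 < w k})

/-- `span(w) := gcd {k ≥ 1 : w_k > 0}`. -/
noncomputable def spanW (w : ℕ → ℝ) : ℕ :=
  sSup {d : ℕ | ∀ k : ℕ, 1 ≤ k → 0 < w k → d ∣ k}

/-- The partition function `Z(m,n)` of the balls-in-boxes model. -/
noncomputable def Zball (w : ℕ → ℝ) (m n : ℕ) : ℝ :=
  ∑ y ∈ Finset.Nat.antidiagonalTuple n m, ∏ i, w (y i)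

/-- `P(B_{m,n} ∈ A)`: the probability that the random allocation `B_{m,n}` (taking each
allocation `y` with probability `w(y)/Z(m,n)`) lies in the set `A`. -/
noncomputable def ballsProb (w : ℕ → ℝ) (m n : ℕ) (A : Set (Fin n → ℕ)) : ℝ :=
  (∑ y ∈ (Finset.Nat.antidiagonalTuple n m).filter (fun y => y ∈ A), ∏ i, w (y i)) /
    Zball w m n

/-- The probability weight sequence `π_k := w_k τ(λ)^k / Φ(τ(λ))`. -/
noncomputable def piW (w : ℕ → ℝ) (lam : ℝ) (k : ℕ) : ℝ :=
  w k * (tauW w (ENNReal.ofReal lam)).toReal ^ k /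
    (PhiE w (tauW w (ENNReal.ofReal lam)).toReal).toReal

/-- `N_k(y)`: the number of boxes of an allocation `y` containing exactly `k` balls. -/
def boxCount {n : ℕ} (y : Fin n → ℕ) (k : ℕ) : ℕ :=
  (Finset.univ.filter fun i => y i = k).card

section Switch
variable {α : Type*} [DecidableEq α]

noncomputable def pickSub (s : Finset α) (a : ℕ) : Finset α :=
  if h : a ≤ s.card then (s.exists_subset_card_eq h).choose else s

lemma pickSub_subset (s : Finset α) (a : ℕ) : pickSub s a ⊆ s := by
  unfold pickSub; split_ifs with h
  · exact (s.exists_subset_card_eq h).choose_spec.1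
  · exact subset_rfl

lemma pickSub_card (s : Finset α) {a : ℕ} (h : a ≤ s.card) : (pickSub s a).card = a := by
  unfold pickSub; rw [dif_pos h]; exact (s.exists_subset_card_eq h).choose_spec.2

end Switch

noncomputable def switchF {n : ℕ} (N : ℕ) (y : Fin n → ℕ) (s : Finset (Fin n)) (a : ℕ) :
    Fin n → ℕ :=
  fun i => if i ∈ pickSub s a then N else if i ∈ s then 0 else y i

section SwitchLemmas
variable {n N a : ℕ} {y : Fin n → ℕ} {s : Finset (Fin n)}

lemma switchF_off {i : Fin n} (h : i ∉ s) : switchF N y s a i = y i := by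
  unfold switchF
  rw [if_neg (fun hi => h (pickSub_subset s a hi)), if_neg h]

lemma sum_switchF (hs : s.card = N) (ha : a ≤ N) :
    ∑ i, switchF N y s a i = ∑ i ∈ sᶜ, y i + a * N := by
  have htc : (pickSub s a).card = a := pickSub_card s (hs ▸ ha)
  rw [← Finset.sum_add_sum_compl s (switchF N y s a)]
  have h2 : ∑ i ∈ sᶜ, switchF N y s a i = ∑ i ∈ sᶜ, y i :=
    Finset.sum_congr rfl fun i hi => switchF_off (by simpa using hi)
  have h1 : ∑ i ∈ s, switchF N y s a i = a * N := by
    rw [← Finset.sum_sdiff (pickSub_subset s a)]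
    have hz : ∑ i ∈ s \ pickSub s a, switchF N y s a i = 0 := by
      apply Finset.sum_eq_zero
      intro i hi
      rw [Finset.mem_sdiff] at hi
      unfold switchF
      rw [if_neg hi.2, if_pos hi.1]
    have hN' : ∑ i ∈ pickSub s a, switchF N y s a i = a * N := by
      rw [Finset.sum_congr rfl (fun i hi => by unfold switchF; rw [if_pos hi]),
        Finset.sum_const, htc, smul_eq_mul]
    rw [hz, hN', zero_add]
  rw [h1, h2]; ring

end SwitchLemmas

section SwitchLemmas2
variable {n N a : ℕ} {y : Fin n → ℕ} {s : Finset (Fin n)}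

lemma sum_switchF' (hs : s.card = N) (ha : a ≤ N) (hys : ∀ i ∈ s, y i = a) :
    ∑ i, switchF N y s a i = ∑ i, y i := by
  rw [sum_switchF hs ha, ← Finset.sum_add_sum_compl s y]
  have : ∑ i ∈ s, y i = a * N := by
    rw [Finset.sum_congr rfl hys, Finset.sum_const, hs, smul_eq_mul, mul_comm]
  rw [this]; ring

lemma prod_switchF (w : ℕ → ℝ) (hs : s.card = N) (ha : a ≤ N) (hys : ∀ i ∈ s, y i = a) :
    (∏ i, w (y i)) * (w N ^ a * w 0 ^ (N - a)) = (∏ i, w (switchF N y s a i)) * w a ^ N := by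
  have htc : (pickSub s a).card = a := pickSub_card s (hs ▸ ha)
  rw [← Finset.prod_mul_prod_compl s (fun i => w (y i)),
    ← Finset.prod_mul_prod_compl s (fun i => w (switchF N y s a i))]
  have h2 : ∏ i ∈ sᶜ, w (switchF N y s a i) = ∏ i ∈ sᶜ, w (y i) :=
    Finset.prod_congr rfl fun i hi => by rw [switchF_off (by simpa using hi)]
  have h1 : ∏ i ∈ s, w (y i) = w a ^ N := by
    rw [Finset.prod_congr rfl (fun i hi => by rw [hys i hi]), Finset.prod_const, hs]
  have h3 : ∏ i ∈ s, w (switchF N y s a i) = w N ^ a * w 0 ^ (N - a) := by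
    rw [← Finset.prod_sdiff (pickSub_subset s a)]
    have hz : ∏ i ∈ s \ pickSub s a, w (switchF N y s a i) = w 0 ^ (N - a) := by
      have hz0 : ∀ i ∈ s \ pickSub s a, w (switchF N y s a i) = w 0 := by
        intro i hi
        rw [Finset.mem_sdiff] at hi
        unfold switchF; rw [if_neg hi.2, if_pos hi.1]
      rw [Finset.prod_congr rfl hz0, Finset.prod_const,
        Finset.card_sdiff_of_subset (pickSub_subset s a), htc, hs]
    have hN' : ∏ i ∈ pickSub s a, w (switchF N y s a i) = w N ^ a := by
      rw [Finset.prod_congr rfl (fun i hi => by unfold switchF; rw [if_pos hi]),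
        Finset.prod_const, htc]
    rw [hz, hN']; ring
  rw [h1, h2, h3]; ring

lemma boxCount_switchF (hN : 1 ≤ N) (hs : s.card = N) (ha : a ≤ N) :
    boxCount (switchF N y s a) N ≤ boxCount y N + a := by
  have htc : (pickSub s a).card = a := pickSub_card s (hs ▸ ha)
  unfold boxCount
  calc (Finset.univ.filter fun i => switchF N y s a i = N).card
      ≤ ((Finset.univ.filter fun i => y i = N) ∪ pickSub s a).card := by
        apply Finset.card_le_card
        intro i hi
        rw [Finset.mem_filter] at hi
        rw [Finset.mem_union]
        by_cases h1 : i ∈ pickSub s a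
        · exact Or.inr h1
        · by_cases h2 : i ∈ s
          · exfalso
            have h3 : switchF N y s a i = 0 := by unfold switchF; rw [if_neg h1, if_pos h2]
            have h4 := h3.symm.trans hi.2
            omega
          · left
            rw [Finset.mem_filter]
            refine ⟨Finset.mem_univ i, ?_⟩
            rw [← switchF_off (N := N) (a := a) (y := y) h2]; exact hi.2
    _ ≤ (Finset.univ.filter fun i => y i = N).card + a := by
        calc ((Finset.univ.filter fun i => y i = N) ∪ pickSub s a).card
            ≤ (Finset.univ.filter fun i => y i = N).card + (pickSub s a).card :=
              Finset.card_union_le _ _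
          _ = _ := by rw [htc]

lemma switchF_inj (hN : 1 ≤ N) (hs : s.card = N)
    {y₁ y₂ : Fin n → ℕ} {a₁ a₂ : ℕ}
    (h1 : ∀ i ∈ s, y₁ i = a₁) (h2 : ∀ i ∈ s, y₂ i = a₂)
    (hsum : ∑ i, y₁ i = ∑ i, y₂ i)
    (heq : switchF N y₁ s a₁ = switchF N y₂ s a₂) : y₁ = y₂ := by
  have hoff : ∀ i ∈ sᶜ, y₁ i = y₂ i := by
    intro i hi
    rw [Finset.mem_compl] at hi
    rw [← switchF_off (N := N) (a := a₁) (y := y₁) hi, heq, switchF_off hi]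
  have hsum_c : ∑ i ∈ sᶜ, y₁ i = ∑ i ∈ sᶜ, y₂ i := Finset.sum_congr rfl hoff
  have hsum_s : ∑ i ∈ s, y₁ i = ∑ i ∈ s, y₂ i := by
    have e1 := Finset.sum_add_sum_compl s y₁
    have e2 := Finset.sum_add_sum_compl s y₂
    omega
  have hs1 : ∑ i ∈ s, y₁ i = N * a₁ := by
    rw [Finset.sum_congr rfl h1, Finset.sum_const, hs, smul_eq_mul]
  have hs2 : ∑ i ∈ s, y₂ i = N * a₂ := by
    rw [Finset.sum_congr rfl h2, Finset.sum_const, hs, smul_eq_mul]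
  have ha : a₁ = a₂ := by
    rw [hs1, hs2] at hsum_s
    exact Nat.eq_of_mul_eq_mul_left hN hsum_s
  funext i
  by_cases hi : i ∈ s
  · rw [h1 i hi, h2 i hi, ha]
  · exact hoff i (Finset.mem_compl.mpr hi)

end SwitchLemmas2

lemma fiber_card_le {n N : ℕ} (hN : 1 ≤ N) (y' : Fin n → ℕ) (Fs : Finset (Finset (Fin n)))
    (hFs : ∀ s ∈ Fs, (∀ i ∈ s, y' i = N ∨ y' i = 0) ∧
      (s.filter (fun i => y' i = 0)).card ≤ N - 1) :
    Fs.card ≤ 2 ^ (boxCount y' N) * ∑ e ∈ Finset.range N, n.choose e := by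
  classical
  set BN := Finset.univ.filter (fun i : Fin n => y' i = N) with hBN
  set T := BN.powerset ×ˢ
    ((Finset.range N).biUnion (fun e => (Finset.univ : Finset (Fin n)).powersetCard e)) with hT
  have hrec : ∀ s ∈ Fs, s.filter (fun i => y' i = N) ∪ s.filter (fun i => y' i = 0) = s := by
    intro s hs
    ext i
    simp only [Finset.mem_union, Finset.mem_filter]
    constructor
    · rintro (⟨h, _⟩ | ⟨h, _⟩) <;> exact h
    · intro h
      rcases (hFs s hs).1 i h with h' | h'
      · exact Or.inl ⟨h, h'⟩
      · exact Or.inr ⟨h, h'⟩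
  have hmaps : ∀ s ∈ Fs,
      (s.filter (fun i => y' i = N), s.filter (fun i => y' i = 0)) ∈ T := by
    intro s hs
    rw [hT, Finset.mem_product]
    constructor
    · rw [Finset.mem_powerset]
      intro i hi
      rw [Finset.mem_filter] at hi
      rw [hBN, Finset.mem_filter]
      exact ⟨Finset.mem_univ i, hi.2⟩
    · rw [Finset.mem_biUnion]
      refine ⟨(s.filter (fun i => y' i = 0)).card, ?_, ?_⟩
      · rw [Finset.mem_range]
        have := (hFs s hs).2
        omega
      · rw [Finset.mem_powersetCard]
        exact ⟨Finset.subset_univ _, rfl⟩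
  have hinj : Set.InjOn (fun s => (s.filter (fun i => y' i = N), s.filter (fun i => y' i = 0)))
      (Fs : Set (Finset (Fin n))) := by
    intro s hs t ht h
    simp only [Prod.mk.injEq] at h
    rw [← hrec s hs, ← hrec t ht, h.1, h.2]
  calc Fs.card ≤ T.card := Finset.card_le_card_of_injOn _ hmaps hinj
    _ ≤ 2 ^ (boxCount y' N) * ∑ e ∈ Finset.range N, n.choose e := by
        rw [hT, Finset.card_product, Finset.card_powerset]
        apply Nat.mul_le_mul
        · exact le_refl _
        · calc ((Finset.range N).biUnion
              (fun e => (Finset.univ : Finset (Fin n)).powersetCard e)).card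
              ≤ ∑ e ∈ Finset.range N, ((Finset.univ : Finset (Fin n)).powersetCard e).card :=
                Finset.card_biUnion_le
            _ = ∑ e ∈ Finset.range N, n.choose e := by
                apply Finset.sum_congr rfl
                intro e _
                rw [Finset.card_powersetCard, Finset.card_univ, Fintype.card_fin]

lemma num_bound (w : ℕ → ℝ) (hw : ∀ k, 0 ≤ w k) (h0 : 0 < w 0)
    (N : ℕ) (hN2 : 2 ≤ N) (hNpos : 0 < w N) (hNmax : ∀ k, 0 < w k → k ≤ N)
    (j n m : ℕ) :
    ((m / (N * N) - j).choose N : ℝ) *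
      ∑ y ∈ (Finset.Nat.antidiagonalTuple n m).filter
        (fun y => boxCount y N < j ∧ (∏ i, w (y i)) ≠ 0), ∏ i, w (y i)
    ≤ (∑ a ∈ Finset.Ico 1 N, w a ^ N / (w N ^ a * w 0 ^ (N - a))) *
      (((2 ^ (j + N) * ∑ e ∈ Finset.range N, n.choose e : ℕ) : ℝ) * Zball w m n) := by
  classical
  have hN0 : 0 < N := by omega
  set f : (Fin n → ℕ) → ℝ := fun y => ∏ i, w (y i) with hf
  set antid := Finset.Nat.antidiagonalTuple n m with hantid
  set A := antid.filter (fun y => boxCount y N < j ∧ f y ≠ 0) with hA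
  set S : (Fin n → ℕ) → Finset (Finset (Fin n)) := fun y =>
    (Finset.univ.powersetCard N).filter
      (fun s => ∃ a, 1 ≤ a ∧ a < N ∧ ∀ i ∈ s, y i = a) with hS
  set G : (Fin n → ℕ) → Finset (Fin n) → (Fin n → ℕ) := fun y s =>
    switchF N y s ((∑ i ∈ s, y i) / N) with hG
  set R := ∑ a ∈ Finset.Ico 1 N, w a ^ N / (w N ^ a * w 0 ^ (N - a)) with hR
  set K := 2 ^ (j + N) * ∑ e ∈ Finset.range N, n.choose e with hK
  set Mn := (m / (N * N) - j).choose N with hMn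
  have hf0 : ∀ y, 0 ≤ f y := fun y => Finset.prod_nonneg (fun i _ => hw _)
  have hR0 : 0 ≤ R := Finset.sum_nonneg fun a _ => div_nonneg (pow_nonneg (hw _) _)
    (mul_nonneg (pow_nonneg (le_of_lt hNpos) _) (pow_nonneg (le_of_lt h0) _))
  -- basic facts about members of S y
  have hSfact : ∀ y : Fin n → ℕ, ∀ s ∈ S y, s.card = N ∧
      ∃ a, 1 ≤ a ∧ a < N ∧ (∀ i ∈ s, y i = a) ∧ (∑ i ∈ s, y i) / N = a := by
    intro y s hs
    rw [hS, Finset.mem_filter, Finset.mem_powersetCard] at hs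
    obtain ⟨⟨-, hcard⟩, a, ha1, haN, hys⟩ := hs
    refine ⟨hcard, a, ha1, haN, hys, ?_⟩
    rw [Finset.sum_congr rfl hys, Finset.sum_const, hcard, smul_eq_mul,
      Nat.mul_div_cancel_left _ hN0]
  -- sums of members of A
  have hAsum : ∀ y ∈ A, ∑ i, y i = m := by
    intro y hy
    rw [hA, Finset.mem_filter] at hy
    exact Finset.Nat.mem_antidiagonalTuple.mp hy.1
  -- (3) G maps into the antidiagonal
  have hGmem : ∀ y ∈ A, ∀ s ∈ S y, G y s ∈ antid := by
    intro y hy s hs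
    obtain ⟨hcard, a, ha1, haN, hys, haval⟩ := hSfact y s hs
    rw [hantid, Finset.Nat.mem_antidiagonalTuple]
    rw [hG]
    simp only [haval]
    rw [sum_switchF' hcard (le_of_lt haN) hys]
    exact hAsum y hy
  -- (4) boxCount bound for images
  have hGbox : ∀ y ∈ A, ∀ s ∈ S y, boxCount (G y s) N ≤ j + N := by
    intro y hy s hs
    obtain ⟨hcard, a, ha1, haN, hys, haval⟩ := hSfact y s hs
    have hyb : boxCount y N < j := by
      rw [hA, Finset.mem_filter] at hy; exact hy.2.1
    calc boxCount (G y s) N = boxCount (switchF N y s a) N := by rw [hG]; simp only [haval]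
      _ ≤ boxCount y N + a := boxCount_switchF (by omega) hcard (le_of_lt haN)
      _ ≤ j + N := by omega
  -- (2) pointwise weight inequality
  have hpoint : ∀ y ∈ A, ∀ s ∈ S y, f y ≤ R * f (G y s) := by
    intro y hy s hs
    obtain ⟨hcard, a, ha1, haN, hys, haval⟩ := hSfact y s hs
    have hGa : G y s = switchF N y s a := by rw [hG]; simp only [haval]
    have hprod : f y * (w N ^ a * w 0 ^ (N - a)) = f (G y s) * w a ^ N := by
      rw [hGa]; exact prod_switchF w hcard (le_of_lt haN) hys
    have hd : 0 < w N ^ a * w 0 ^ (N - a) :=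
      mul_pos (pow_pos hNpos _) (pow_pos h0 _)
    have hfy : f y = f (G y s) * (w a ^ N / (w N ^ a * w 0 ^ (N - a))) := by
      rw [mul_div_assoc']
      rw [eq_div_iff (ne_of_gt hd)]
      exact hprod
    have hra : w a ^ N / (w N ^ a * w 0 ^ (N - a)) ≤ R := by
      rw [hR]
      apply Finset.single_le_sum (f := fun a => w a ^ N / (w N ^ a * w 0 ^ (N - a)))
      · intro b _
        exact div_nonneg (pow_nonneg (hw _) _)
          (mul_nonneg (pow_nonneg (le_of_lt hNpos) _) (pow_nonneg (le_of_lt h0) _))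
      · rw [Finset.mem_Ico]; exact ⟨ha1, haN⟩
    calc f y = f (G y s) * (w a ^ N / (w N ^ a * w 0 ^ (N - a))) := hfy
      _ ≤ f (G y s) * R := mul_le_mul_of_nonneg_left hra (hf0 _)
      _ = R * f (G y s) := mul_comm _ _
  -- (1) count lower bound
  have hcount : ∀ y ∈ A, Mn ≤ (S y).card := by
    intro y hy
    have hy' := hy
    rw [hA, Finset.mem_filter] at hy'
    obtain ⟨hymem, hybox, hyne⟩ := hy'
    have hwi : ∀ i, w (y i) ≠ 0 := by
      intro i
      intro hz
      exact hyne (Finset.prod_eq_zero (Finset.mem_univ i) hz)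
    have hyiN : ∀ i, y i ≤ N := fun i => hNmax _ (lt_of_le_of_ne (hw _) (Ne.symm (hwi i)))
    set mid := Finset.univ.filter (fun i : Fin n => y i ≠ 0 ∧ y i ≠ N) with hmid
    set pos := Finset.univ.filter (fun i : Fin n => y i ≠ 0) with hpos
    have hm_sum : ∑ i, y i = m := hAsum y hy
    have h1 : m ≤ N * pos.card := by
      have e1 : ∑ i ∈ pos, y i = ∑ i, y i := by
        rw [hpos]
        exact Finset.sum_filter_of_ne (fun i _ h => h)
      have e2 : ∑ i ∈ pos, y i ≤ ∑ i ∈ pos, N :=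
        Finset.sum_le_sum (fun i _ => hyiN i)
      rw [Finset.sum_const, smul_eq_mul, e1, hm_sum, mul_comm] at e2
      exact e2
    have h2 : pos.card ≤ mid.card + boxCount y N := by
      have : pos ⊆ mid ∪ (Finset.univ.filter (fun i => y i = N)) := by
        intro i hi
        rw [hpos, Finset.mem_filter] at hi
        rw [Finset.mem_union, hmid, Finset.mem_filter, Finset.mem_filter]
        by_cases hiN : y i = N
        · exact Or.inr ⟨Finset.mem_univ i, hiN⟩
        · exact Or.inl ⟨Finset.mem_univ i, hi.2, hiN⟩
      calc pos.card ≤ (mid ∪ (Finset.univ.filter (fun i => y i = N))).card :=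
            Finset.card_le_card this
        _ ≤ mid.card + boxCount y N := Finset.card_union_le _ _
    obtain ⟨a, haIco, hmida⟩ :
        ∃ a ∈ Finset.Ico 1 N, mid.card ≤ (N - 1) * (Finset.univ.filter (fun i => y i = a)).card := by
      have hsub : mid ⊆ (Finset.Ico 1 N).biUnion
          (fun a => Finset.univ.filter (fun i => y i = a)) := by
        intro i hi
        rw [hmid, Finset.mem_filter] at hi
        rw [Finset.mem_biUnion]
        refine ⟨y i, ?_, ?_⟩
        · rw [Finset.mem_Ico]
          have := hyiN i
          obtain ⟨-, h1', h2'⟩ := hi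
          omega
        · rw [Finset.mem_filter]; exact ⟨Finset.mem_univ i, rfl⟩
      have hle : mid.card ≤ ∑ a ∈ Finset.Ico 1 N,
          (Finset.univ.filter (fun i => y i = a)).card :=
        le_trans (Finset.card_le_card hsub) Finset.card_biUnion_le
      by_contra hcon
      push_neg at hcon
      have h1a : (1:ℕ) ∈ Finset.Ico 1 N := by rw [Finset.mem_Ico]; omega
      have hmpos : 1 ≤ mid.card := by have := hcon 1 h1a; omega
      have hsumle : ∑ a ∈ Finset.Ico 1 N,
          (N - 1) * (Finset.univ.filter (fun i => y i = a)).card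
          ≤ ∑ _a ∈ Finset.Ico 1 N, (mid.card - 1) :=
        Finset.sum_le_sum (fun a ha => by have := hcon a ha; omega)
      rw [← Finset.mul_sum, Finset.sum_const, Nat.card_Ico, smul_eq_mul] at hsumle
      have h6 := Nat.le_of_mul_le_mul_left hsumle (show 0 < N - 1 by omega)
      omega
    set c := (Finset.univ.filter (fun i => y i = a)).card with hc
    have h4 : m ≤ N * N * (c + j) := by
      have hj' : boxCount y N ≤ j := le_of_lt hybox
      calc m ≤ N * pos.card := h1
        _ ≤ N * (mid.card + j) := Nat.mul_le_mul_left N (by omega)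
        _ ≤ N * ((N - 1) * c + j) := Nat.mul_le_mul_left N (by omega)
        _ ≤ N * (N * c + N * j) := Nat.mul_le_mul_left N
            (by
              have : (N - 1) * c ≤ N * c := Nat.mul_le_mul_right c (by omega)
              have : j ≤ N * j := Nat.le_mul_of_pos_left j hN0
              omega)
        _ = N * N * (c + j) := by ring
    have h5 : m / (N * N) - j ≤ c := by
      have : m / (N * N) ≤ c + j := by
        calc m / (N * N) ≤ (N * N * (c + j)) / (N * N) := Nat.div_le_div_right h4
          _ = c + j := Nat.mul_div_cancel_left _ (by positivity)
      omega
    calc Mn ≤ c.choose N := Nat.choose_le_choose N h5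
      _ = ((Finset.univ.filter (fun i => y i = a)).powersetCard N).card := by
          rw [Finset.card_powersetCard, hc]
      _ ≤ (S y).card := by
          apply Finset.card_le_card
          intro s hs
          rw [Finset.mem_powersetCard] at hs
          rw [hS, Finset.mem_filter, Finset.mem_powersetCard]
          rw [Finset.mem_Ico] at haIco
          refine ⟨⟨Finset.subset_univ s, hs.2⟩, a, haIco.1, haIco.2, fun i hi => ?_⟩
          have := hs.1 hi
          rw [Finset.mem_filter] at this
          exact this.2
  -- the σ-type of pairs and the injection
  set ψ : (Σ _ : Fin n → ℕ, Finset (Fin n)) → (Fin n → ℕ) × Finset (Fin n) :=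
    fun p => (G p.1 p.2, p.2) with hψ
  set Q := A.sigma (fun y => S y) with hQ
  have hinj : ∀ p ∈ Q, ∀ q ∈ Q, ψ p = ψ q → p = q := by
    intro p hp q hq h
    rw [hQ, Finset.mem_sigma] at hp hq
    have hsnd : p.2 = q.2 := congrArg Prod.snd h
    have hfst : G p.1 p.2 = G q.1 q.2 := congrArg Prod.fst h
    obtain ⟨hcp, ap, hap1, hapN, hyap, havp⟩ := hSfact p.1 p.2 hp.2
    obtain ⟨hcq, aq, haq1, haqN, hyaq, havq⟩ := hSfact q.1 q.2 hq.2
    have hGp : G p.1 p.2 = switchF N p.1 p.2 ap := by rw [hG]; simp only [havp]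
    have hGq : G q.1 q.2 = switchF N q.1 q.2 aq := by rw [hG]; simp only [havq]
    have hyaq' : ∀ i ∈ p.2, q.1 i = aq := by rw [hsnd]; exact hyaq
    have heqsw : switchF N p.1 p.2 ap = switchF N q.1 p.2 aq := by
      rw [← hGp, hfst, hGq, hsnd]
    have hsum12 : ∑ i, p.1 i = ∑ i, q.1 i := by
      rw [hAsum p.1 hp.1, hAsum q.1 hq.1]
    have hfsteq : p.1 = q.1 := switchF_inj (by omega) hcp hyap hyaq' hsum12 heqsw
    obtain ⟨p1, p2⟩ := p
    obtain ⟨q1, q2⟩ := q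
    simp only at hfsteq hsnd
    rw [hfsteq, hsnd]
  have himg_mem : ∀ p' ∈ Q.image ψ, p'.1 ∈ antid := by
    intro p' hp'
    obtain ⟨p, hpQ, hψp⟩ := Finset.mem_image.mp hp'
    rw [hQ, Finset.mem_sigma] at hpQ
    rw [← hψp]
    exact hGmem p.1 hpQ.1 p.2 hpQ.2
  have hinner : ∀ y' ∈ antid,
      ∑ p' ∈ (Q.image ψ).filter (fun p' => p'.1 = y'), f p'.1 ≤ (K : ℝ) * f y' := by
    intro y' _
    set fib := (Q.image ψ).filter (fun p' => p'.1 = y') with hfib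
    have hconst : ∑ p' ∈ fib, f p'.1 = (fib.card : ℝ) * f y' := by
      have hcc : ∀ p' ∈ fib, f p'.1 = f y' := fun p' hp' => by
        rw [(Finset.mem_filter.mp hp').2]
      rw [Finset.sum_congr rfl hcc, Finset.sum_const, nsmul_eq_mul]
    rw [hconst]
    rcases fib.eq_empty_or_nonempty with he | hne
    · rw [he]
      simp only [Finset.card_empty, Nat.cast_zero, zero_mul]
      exact mul_nonneg (Nat.cast_nonneg K) (hf0 y')
    · obtain ⟨p₀, hp₀⟩ := hne
      have hp₀' := Finset.mem_filter.mp hp₀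
      obtain ⟨p, hpQ, hψp⟩ := Finset.mem_image.mp hp₀'.1
      rw [hQ, Finset.mem_sigma] at hpQ
      have hy'G : G p.1 p.2 = y' := by
        have := congrArg Prod.fst hψp
        simp only [hψ] at this
        rw [this, hp₀'.2]
      have hbc : boxCount y' N ≤ j + N := by
        rw [← hy'G]
        exact hGbox p.1 hpQ.1 p.2 hpQ.2
      set Fs := fib.image (fun p' => p'.2) with hFsdef
      have hcardeq : Fs.card = fib.card := by
        apply Finset.card_image_of_injOn
        intro u hu v hv huv
        have hu' := (Finset.mem_filter.mp hu).2
        have hv' := (Finset.mem_filter.mp hv).2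
        exact Prod.ext (hu'.trans hv'.symm) huv
      have hFsprop : ∀ s ∈ Fs, (∀ i ∈ s, y' i = N ∨ y' i = 0) ∧
          (s.filter (fun i => y' i = 0)).card ≤ N - 1 := by
        intro s hsFs
        obtain ⟨p', hp'fib, hp's⟩ := Finset.mem_image.mp hsFs
        have hp'' := Finset.mem_filter.mp hp'fib
        obtain ⟨q, hqQ, hψq⟩ := Finset.mem_image.mp hp''.1
        rw [hQ, Finset.mem_sigma] at hqQ
        have hsq : q.2 = s := by
          rw [← hp's]
          exact congrArg Prod.snd hψq
        have hy'q : y' = G q.1 q.2 := by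
          have := congrArg Prod.fst hψq
          simp only [hψ] at this
          rw [← hp''.2, ← this]
        obtain ⟨hcq, a, ha1, haN, hya, hav⟩ := hSfact q.1 q.2 hqQ.2
        have hGq : G q.1 q.2 = switchF N q.1 q.2 a := by rw [hG]; simp only [hav]
        have hy'sw : y' = switchF N q.1 s a := by rw [hy'q, hGq, hsq]
        have hpsub : pickSub s a ⊆ s := pickSub_subset s a
        have hpcard : (pickSub s a).card = a := by
          apply pickSub_card
          rw [← hsq, hcq]; omega
        constructor
        · intro i hi
          rw [hy'sw]
          unfold switchF
          by_cases hip : i ∈ pickSub s a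
          · rw [if_pos hip]; exact Or.inl rfl
          · rw [if_neg hip, if_pos hi]; exact Or.inr rfl
        · have hsubf : s.filter (fun i => y' i = 0) ⊆ s \ pickSub s a := by
            intro i hi
            rw [Finset.mem_filter] at hi
            rw [Finset.mem_sdiff]
            refine ⟨hi.1, fun hip => ?_⟩
            have : y' i = N := by
              rw [hy'sw]; unfold switchF; rw [if_pos hip]
            omega
          calc (s.filter (fun i => y' i = 0)).card ≤ (s \ pickSub s a).card :=
              Finset.card_le_card hsubf
            _ = s.card - a := by rw [Finset.card_sdiff_of_subset hpsub, hpcard]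
            _ ≤ N - 1 := by rw [← hsq, hcq]; omega
      have hFsK : fib.card ≤ K := by
        rw [← hcardeq, hK]
        calc Fs.card ≤ 2 ^ (boxCount y' N) * ∑ e ∈ Finset.range N, n.choose e :=
            fiber_card_le (by omega) y' Fs hFsprop
          _ ≤ 2 ^ (j + N) * ∑ e ∈ Finset.range N, n.choose e :=
            Nat.mul_le_mul_right _ (Nat.pow_le_pow_right (by norm_num) hbc)
      exact mul_le_mul_of_nonneg_right (by exact_mod_cast hFsK) (hf0 y')
  calc (Mn : ℝ) * ∑ y ∈ A, f y
      = ∑ y ∈ A, (Mn : ℝ) * f y := Finset.mul_sum _ _ _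
    _ ≤ ∑ y ∈ A, ((S y).card : ℝ) * f y := Finset.sum_le_sum (fun y hy =>
        mul_le_mul_of_nonneg_right (Nat.cast_le.mpr (hcount y hy)) (hf0 y))
    _ = ∑ y ∈ A, ∑ _s ∈ S y, f y := by
        refine Finset.sum_congr rfl (fun y _ => ?_)
        rw [Finset.sum_const, nsmul_eq_mul]
    _ ≤ ∑ y ∈ A, ∑ s ∈ S y, R * f (G y s) :=
        Finset.sum_le_sum (fun y hy => Finset.sum_le_sum (fun s hs => hpoint y hy s hs))
    _ = R * ∑ y ∈ A, ∑ s ∈ S y, f (G y s) := by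
        rw [Finset.mul_sum]
        exact Finset.sum_congr rfl (fun y _ => (Finset.mul_sum _ _ _).symm)
    _ ≤ R * (((2 ^ (j + N) * ∑ e ∈ Finset.range N, n.choose e : ℕ) : ℝ) * Zball w m n) := by
        apply mul_le_mul_of_nonneg_left ?_ hR0
        have hsig : ∑ y ∈ A, ∑ s ∈ S y, f (G y s) = ∑ p ∈ Q, f (G p.1 p.2) := by
          rw [hQ, Finset.sum_sigma]
        have himg : ∑ p ∈ Q, f (G p.1 p.2) = ∑ p' ∈ Q.image ψ, f p'.1 := by
          rw [Finset.sum_image hinj]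
        have hfib : ∑ p' ∈ Q.image ψ, f p'.1 =
            ∑ y' ∈ antid, ∑ p' ∈ (Q.image ψ).filter (fun p' => p'.1 = y'), f p'.1 :=
          (Finset.sum_fiberwise_of_maps_to himg_mem _).symm
        have hZ : Zball w m n = ∑ y' ∈ antid, f y' := rfl
        calc ∑ y ∈ A, ∑ s ∈ S y, f (G y s)
            = ∑ y' ∈ antid, ∑ p' ∈ (Q.image ψ).filter (fun p' => p'.1 = y'), f p'.1 := by
              rw [hsig, himg, hfib]
          _ ≤ ∑ y' ∈ antid, (K : ℝ) * f y' := Finset.sum_le_sum hinner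
          _ = ((K : ℕ) : ℝ) * Zball w m n := by rw [hZ, Finset.mul_sum]
          _ = _ := by rw [hK]


lemma prob_formula (w : ℕ → ℝ) (N j n m : ℕ) (hZ : Zball w m n ≠ 0) :
    ballsProb w m n {y : Fin n → ℕ | j ≤ boxCount y N} =
    1 - (∑ y ∈ (Finset.Nat.antidiagonalTuple n m).filter
        (fun y => boxCount y N < j ∧ (∏ i, w (y i)) ≠ 0), ∏ i, w (y i)) / Zball w m n := by
  classical
  unfold ballsProb
  set antid := Finset.Nat.antidiagonalTuple n m with hantid
  set f : (Fin n → ℕ) → ℝ := fun y => ∏ i, w (y i) with hf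
  have hsplit : ∑ y ∈ antid.filter (fun y => y ∈ {y : Fin n → ℕ | j ≤ boxCount y N}), f y
      + ∑ y ∈ antid.filter (fun y => ¬ (y ∈ {y : Fin n → ℕ | j ≤ boxCount y N})), f y
      = Zball w m n :=
    Finset.sum_filter_add_sum_filter_not antid _ f
  have hnum : ∑ y ∈ antid.filter (fun y => boxCount y N < j ∧ f y ≠ 0), f y
      = ∑ y ∈ antid.filter (fun y => ¬ (y ∈ {y : Fin n → ℕ | j ≤ boxCount y N})), f y := by
    apply Finset.sum_subset
    · intro y hy
      rw [Finset.mem_filter] at hy ⊢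
      refine ⟨hy.1, ?_⟩
      rw [Set.mem_setOf_eq]
      omega
    · intro y hy hyn
      rw [Finset.mem_filter, Set.mem_setOf_eq] at hy
      rw [Finset.mem_filter] at hyn
      by_contra hne
      exact hyn ⟨hy.1, by omega, hne⟩
  rw [← hnum] at hsplit
  rw [eq_sub_iff_add_eq, ← add_div, div_eq_one_iff_eq hZ]
  convert hsplit using 3
  congr!

lemma num_zero_N1 (w : ℕ → ℝ) (hw : ∀ k, 0 ≤ w k) (hNmax : ∀ k, 0 < w k → k ≤ 1)
    (j n m : ℕ) (hjm : j ≤ m) :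
    ∑ y ∈ (Finset.Nat.antidiagonalTuple n m).filter
      (fun y => boxCount y 1 < j ∧ (∏ i, w (y i)) ≠ 0), ∏ i, w (y i) = 0 := by
  classical
  have hempty : (Finset.Nat.antidiagonalTuple n m).filter
      (fun y => boxCount y 1 < j ∧ (∏ i, w (y i)) ≠ 0) = ∅ := by
    rw [Finset.filter_eq_empty_iff]
    intro y hy
    rw [Finset.Nat.mem_antidiagonalTuple] at hy
    rintro ⟨hbox, hne⟩
    have hwi : ∀ i, w (y i) ≠ 0 := fun i hz => hne (Finset.prod_eq_zero (Finset.mem_univ i) hz)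
    have hyi : ∀ i, y i ≤ 1 := fun i => hNmax _ (lt_of_le_of_ne (hw _) (Ne.symm (hwi i)))
    have hsum : ∑ i, y i = boxCount y 1 := by
      unfold boxCount
      rw [Finset.card_filter]
      apply Finset.sum_congr rfl
      intro i _
      have := hyi i
      by_cases h : y i = 1
      · rw [if_pos h, h]
      · rw [if_neg h]; omega
    omega
  rw [hempty, Finset.sum_empty]

/-- Theorem 19.1 of Janson: if `w_0 > 0` and `ω = N` with `1 ≤ N < ∞`, and
`m(n)/n → λ > 0`, then for every fixed `j ≥ 1`, with probability tending to `1` at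
least `j` of the boxes of `B_{m(n),n}` contain exactly `N = ω` balls; in particular
the `j`-th largest box load equals `ω` w.h.p. -/
theorem max_load_bounded_support (w : ℕ → ℝ) (hw : ∀ k, 0 ≤ w k) (h0 : 0 < w 0)
    (N : ℕ) (hN1 : 1 ≤ N) (hNpos : 0 < w N) (hNmax : ∀ k, 0 < w k → k ≤ N)
    (lam : ℝ) (hlam : 0 < lam)
    (m : ℕ → ℕ) (hm : Tendsto (fun n : ℕ => (m n : ℝ) / n) atTop (𝓝 lam)) :
    ∀ j : ℕ, 1 ≤ j →
      Tendsto (fun n : ℕ => ballsProb w (m n) n {y : Fin n → ℕ | j ≤ boxCount y N})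
        (atTop ⊓ Filter.principal {n : ℕ | 0 < Zball w (m n) n}) (𝓝 1) := by
  intro j hj
  have hmn_large : ∀ᶠ n : ℕ in atTop, lam / 2 * n ≤ (m n : ℝ) := by
    have h1 : ∀ᶠ n : ℕ in atTop, lam / 2 < (m n : ℝ) / n :=
      hm.eventually (eventually_gt_nhds (by linarith))
    have h2 : ∀ᶠ n : ℕ in atTop, 1 ≤ n := eventually_ge_atTop 1
    filter_upwards [h1, h2] with n hn1 hn2
    have hn0 : (0:ℝ) < n := by exact_mod_cast hn2
    have := (lt_div_iff₀ hn0).mp hn1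
    linarith
  rcases eq_or_lt_of_le hN1 with hN1' | hN2
  · -- case N = 1
    have hNe : N = 1 := hN1'.symm
    subst hNe
    have hjev : ∀ᶠ n : ℕ in atTop, j ≤ m n := by
      have h3 : Tendsto (fun n : ℕ => lam / 2 * n) atTop atTop :=
        (tendsto_natCast_atTop_atTop (R := ℝ)).const_mul_atTop (by linarith)
      filter_upwards [hmn_large, h3.eventually_ge_atTop (j : ℝ)] with n h4 h5
      exact_mod_cast le_trans h5 h4
    have hevF : ∀ᶠ n in atTop ⊓ Filter.principal {n : ℕ | 0 < Zball w (m n) n},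
        ballsProb w (m n) n {y : Fin n → ℕ | j ≤ boxCount y 1} = 1 := by
      rw [Filter.eventually_inf_principal]
      filter_upwards [hjev] with n hjn hZn
      rw [prob_formula w 1 j n (m n) (ne_of_gt hZn),
        num_zero_N1 w hw hNmax j n (m n) hjn]
      simp
    exact Tendsto.congr' (by filter_upwards [hevF] with n h using h.symm) tendsto_const_nhds
  · -- case 2 ≤ N
    have hN2' : 2 ≤ N := hN2
    have hNr : (0:ℝ) < N := by exact_mod_cast (by omega : 0 < N)
    set q := lam / (4 * N * N) with hq
    have hq0 : 0 < q := by positivity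
    set R := ∑ a ∈ Finset.Ico 1 N, w a ^ N / (w N ^ a * w 0 ^ (N - a)) with hR
    have hR0 : 0 ≤ R := Finset.sum_nonneg fun a _ => div_nonneg (pow_nonneg (hw _) _)
      (mul_nonneg (pow_nonneg (le_of_lt hNpos) _) (pow_nonneg (le_of_lt h0) _))
    set C := R * ((2:ℝ) ^ (j + N) * N) * (N.factorial : ℝ) / q ^ N with hC
    have hC0 : 0 ≤ C := by positivity
    have he3 : ∀ᶠ n : ℕ in atTop, (1 + j + N : ℝ) ≤ q * n :=
      ((tendsto_natCast_atTop_atTop (R := ℝ)).const_mul_atTop hq0).eventually_ge_atTop _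
    have hmain : ∀ᶠ n in atTop ⊓ Filter.principal {n : ℕ | 0 < Zball w (m n) n},
        1 - C / n ≤ ballsProb w (m n) n {y : Fin n → ℕ | j ≤ boxCount y N} ∧
        ballsProb w (m n) n {y : Fin n → ℕ | j ≤ boxCount y N} ≤ 1 := by
      rw [Filter.eventually_inf_principal]
      filter_upwards [hmn_large, he3, eventually_ge_atTop 1] with n hmn he3n h1n hZset
      have hZ : 0 < Zball w (m n) n := hZset
      have hn0 : (0:ℝ) < n := by exact_mod_cast h1n
      set Num := ∑ y ∈ (Finset.Nat.antidiagonalTuple n (m n)).filter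
        (fun y => boxCount y N < j ∧ (∏ i, w (y i)) ≠ 0), ∏ i, w (y i) with hNum
      have hNum0 : 0 ≤ Num := Finset.sum_nonneg fun y hy =>
        Finset.prod_nonneg fun i _ => hw _
      set Ln := m n / (N * N) - j with hLn
      set Mn := Ln.choose N with hMn
      set Ksum := ∑ e ∈ Finset.range N, n.choose e with hKsum
      have key := num_bound w hw h0 N hN2' hNpos hNmax j n (m n)
      rw [← hR, ← hNum, ← hLn, ← hKsum, ← hMn] at key
      -- real lower bound on Ln
      set d := m n / (N * N) with hd
      have hdiv : (m n : ℝ) < (N * N : ℝ) * (d + 1) := by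
        have := Nat.lt_mul_div_succ (m n) (show 0 < N * N by positivity)
        exact_mod_cast this
      have hdr : (m n : ℝ) / (N * N) < (d : ℝ) + 1 := by
        rw [div_lt_iff₀ (by positivity)]
        linarith [hdiv]
      have hqq : 2 * q * n ≤ (m n : ℝ) / (N * N) := by
        rw [hq, le_div_iff₀ (by positivity : (0:ℝ) < (N:ℝ) * N)]
        have hid : 2 * (lam / (4 * (N:ℝ) * N)) * n * ((N:ℝ) * N) = lam / 2 * n := by
          field_simp
          ring
        rw [hid]
        exact hmn
      have hdlb : 2 * q * n - 1 < (d : ℝ) := by linarith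
      have hjd : j ≤ d := by
        have : (j : ℝ) < d := by linarith [he3n, hdlb]
        exact_mod_cast le_of_lt this
      have hLnr : q * n + N ≤ (Ln : ℝ) := by
        rw [hLn, Nat.cast_sub hjd]
        have h9 : (1 + j + N : ℝ) ≤ q * n := he3n
        push_cast
        linarith
      have hLnN : N ≤ Ln := by
        have : (N : ℝ) ≤ (Ln : ℝ) := by linarith [hLnr, mul_pos hq0 hn0]
        exact_mod_cast this
      -- lower bound on Mn
      have hMnr : q ^ N * (n : ℝ) ^ N / (N.factorial : ℝ) ≤ (Mn : ℝ) := by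
        have hnat : (Ln + 1 - N) ^ N ≤ N.factorial * Mn := by
          rw [hMn, ← Nat.descFactorial_eq_factorial_mul_choose]
          exact Nat.pow_sub_le_descFactorial Ln N
        have hcast : (((Ln + 1 - N : ℕ) : ℝ)) ^ N ≤ (N.factorial : ℝ) * Mn := by
          exact_mod_cast hnat
        have hsub : q * n ≤ ((Ln + 1 - N : ℕ) : ℝ) := by
          rw [Nat.cast_sub (by omega : N ≤ Ln + 1)]
          push_cast
          linarith
        have hqn0 : 0 ≤ q * n := by positivity
        have hpow : (q * n) ^ N ≤ (((Ln + 1 - N : ℕ) : ℝ)) ^ N :=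
          pow_le_pow_left₀ hqn0 hsub N
        rw [div_le_iff₀ (by positivity : (0:ℝ) < (N.factorial : ℝ))]
        calc q ^ N * (n:ℝ) ^ N = (q * n) ^ N := by rw [mul_pow]
          _ ≤ (((Ln + 1 - N : ℕ) : ℝ)) ^ N := hpow
          _ ≤ (N.factorial : ℝ) * Mn := hcast
          _ = (Mn : ℝ) * N.factorial := by ring
      have hMnpos : (0:ℝ) < Mn := lt_of_lt_of_le (by positivity) hMnr
      -- upper bound on Ksum
      have hKr : ((2 ^ (j + N) * Ksum : ℕ) : ℝ) ≤ 2 ^ (j + N) * ((N : ℝ) * (n : ℝ) ^ (N - 1)) := by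
        have hnat : Ksum ≤ N * n ^ (N - 1) := by
          rw [hKsum]
          have hterm : ∀ e ∈ Finset.range N, n.choose e ≤ n ^ (N - 1) := by
            intro e he
            rw [Finset.mem_range] at he
            exact le_trans (Nat.choose_le_pow n e) (Nat.pow_le_pow_right h1n (by omega))
          calc ∑ e ∈ Finset.range N, n.choose e ≤ ∑ _e ∈ Finset.range N, n ^ (N - 1) :=
              Finset.sum_le_sum hterm
            _ = N * n ^ (N - 1) := by rw [Finset.sum_const, Finset.card_range, smul_eq_mul]
        push_cast
        have : ((Ksum : ℝ)) ≤ (N : ℝ) * (n : ℝ) ^ (N - 1) := by exact_mod_cast hnat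
        nlinarith [pow_pos (show (0:ℝ) < 2 by norm_num) (j + N)]
      -- combine: Num / Z ≤ C / n
      have h7 : R * ((2 ^ (j + N) * Ksum : ℕ) : ℝ) * n ≤ C * Mn := by
        have hpowN : (n : ℝ) ^ (N - 1) * n = (n : ℝ) ^ N := by
          rw [← pow_succ]
          congr 1
          omega
        calc R * ((2 ^ (j + N) * Ksum : ℕ) : ℝ) * n
            ≤ R * (2 ^ (j + N) * ((N : ℝ) * (n : ℝ) ^ (N - 1))) * n := by
              apply mul_le_mul_of_nonneg_right _ (le_of_lt hn0)
              exact mul_le_mul_of_nonneg_left hKr hR0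
          _ = R * ((2:ℝ) ^ (j + N) * N) * ((n : ℝ) ^ (N - 1) * n) := by ring
          _ = R * ((2:ℝ) ^ (j + N) * N) * (n : ℝ) ^ N := by rw [hpowN]
          _ = C * (q ^ N * (n : ℝ) ^ N / (N.factorial : ℝ)) := by
              rw [hC]
              field_simp
          _ ≤ C * Mn := mul_le_mul_of_nonneg_left hMnr hC0
      have hfrac : Num / Zball w (m n) n ≤ C / n := by
        rw [div_le_div_iff₀ hZ hn0]
        have step : Num * n * Mn ≤ C * Zball w (m n) n * Mn := by
          calc Num * n * Mn = (Mn * Num) * n := by ring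
            _ ≤ R * (((2 ^ (j + N) * Ksum : ℕ) : ℝ) * Zball w (m n) n) * n := by
                apply mul_le_mul_of_nonneg_right key (le_of_lt hn0)
            _ = (R * ((2 ^ (j + N) * Ksum : ℕ) : ℝ) * n) * Zball w (m n) n := by ring
            _ ≤ (C * Mn) * Zball w (m n) n :=
                mul_le_mul_of_nonneg_right h7 (le_of_lt hZ)
            _ = C * Zball w (m n) n * Mn := by ring
        exact le_of_mul_le_mul_right step hMnpos
      rw [prob_formula w N j n (m n) (ne_of_gt hZ), ← hNum]
      constructor
      · linarith
      · have : 0 ≤ Num / Zball w (m n) n := div_nonneg hNum0 (le_of_lt hZ)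
        linarith
    have htendC : Tendsto (fun n : ℕ => 1 - C / n)
        (atTop ⊓ Filter.principal {n : ℕ | 0 < Zball w (m n) n}) (𝓝 1) := by
      have h1 : Tendsto (fun n : ℕ => 1 - C / n) atTop (𝓝 (1 - 0)) :=
        tendsto_const_nhds.sub (tendsto_const_div_atTop_nhds_zero_nat C)
      rw [sub_zero] at h1
      exact h1.mono_left inf_le_left
    exact tendsto_of_tendsto_of_tendsto_of_le_of_le' htendC
      (tendsto_const_nhds.mono_left inf_le_left)
      (hmain.mono fun n h => h.1) (hmain.mono fun n h => h.2)
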